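/- Let A be an F_p-algebra with a Frobenius splitting φ : A → A (an additive map satisfying φ(a^p b) = a φ(b) and φ(1) = 1). Then the set A × A with operations (a_0,a_1) +_φ (b_0,b_1) = (a_0+b_0, a_1+b_1 − φ(P(a_0,b_0))) and (a_0,a_1) ·_φ (b_0,b_1) = (a_0 b_0, a_0 b_1 + b_0 a_1), where P(a,b) = ((a+b)^p − a^p − b^p)/p ∈ Z[a,b], is a commutative ring W_2^φ(A). -/
import Mathlib


/-- A type-level copy of `A × A`, the underlying set of twisted Witt vectors. -/
structure WittPair (A : Type*) where
  fst : A
  snd : A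

/-- The value in `A` of the integral polynomial `P(a,b) = ((a+b)^p − a^p − b^p)/p`,
written via binomial coefficients: `P(a,b) = Σ_{0<i<p} (C(p,i)/p) a^i b^{p-i}`. -/
def wittP (p : ℕ) {A : Type*} [CommRing A] (a b : A) : A :=
  ∑ i ∈ Finset.Ioo 0 p, ((p.choose i / p : ℕ) : A) * a ^ i * b ^ (p - i)

open Finset

lemma wittP_zero_left (p : ℕ) {A : Type*} [CommRing A] (b : A) : wittP p 0 b = 0 := by
  refine Finset.sum_eq_zero fun i hi => ?_
  rw [zero_pow (Finset.mem_Ioo.mp hi).1.ne']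
  ring

lemma wittP_zero_right (p : ℕ) {A : Type*} [CommRing A] (a : A) : wittP p a 0 = 0 := by
  refine Finset.sum_eq_zero fun i hi => ?_
  rw [zero_pow (Nat.sub_ne_zero_of_lt (Finset.mem_Ioo.mp hi).2)]
  ring

lemma wittP_smul (p : ℕ) {A : Type*} [CommRing A] (c a b : A) :
    wittP p (c * a) (c * b) = c ^ p * wittP p a b := by
  unfold wittP
  rw [Finset.mul_sum]
  refine Finset.sum_congr rfl fun i hi => ?_
  obtain ⟨h1, h2⟩ := Finset.mem_Ioo.mp hi
  have hc : c ^ i * c ^ (p - i) = c ^ p := by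
    rw [← pow_add, Nat.add_sub_cancel' h2.le]
  rw [mul_pow, mul_pow, ← hc]
  ring

lemma p_mul_wittP (p : ℕ) (hp : p.Prime) {A : Type*} [CommRing A] (a b : A) :
    (p : A) * wittP p a b = (a + b) ^ p - a ^ p - b ^ p := by
  have h : (p : A) * wittP p a b
      = ∑ i ∈ Finset.Ioo 0 p, ((p.choose i : ℕ) : A) * a ^ i * b ^ (p - i) := by
    rw [wittP, Finset.mul_sum]
    refine Finset.sum_congr rfl fun i hi => ?_
    obtain ⟨h1, h2⟩ := Finset.mem_Ioo.mp hi
    have hd : p * (p.choose i / p) = p.choose i :=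
      Nat.mul_div_cancel' (hp.dvd_choose_self h1.ne' h2)
    have hd' := congrArg (Nat.cast : ℕ → A) hd
    push_cast at hd'
    linear_combination a ^ i * b ^ (p - i) * hd'
  have hrange : Finset.range p \ {0} = Finset.Ioo 0 p := by
    ext i; simp [Nat.pos_iff_ne_zero, and_comm]
  have h0 : (0:ℕ) ∈ Finset.range p := by simp [hp.pos]
  rw [h, add_pow, Finset.sum_range_succ]
  rw [← Finset.add_sum_erase _ _ h0, Finset.erase_eq, hrange]
  simp only [pow_zero, Nat.sub_zero, Nat.choose_zero_right, Nat.choose_self, Nat.cast_one,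
    one_mul, mul_one, Nat.sub_self]
  rw [show ∑ i ∈ Finset.Ioo 0 p, a ^ i * b ^ (p - i) * (p.choose i : A)
      = ∑ i ∈ Finset.Ioo 0 p, ((p.choose i : ℕ) : A) * a ^ i * b ^ (p - i) from
    Finset.sum_congr rfl fun i _ => by ring]
  ring

lemma map_wittP (p : ℕ) {A B : Type*} [CommRing A] [CommRing B] (f : A →+* B) (a b : A) :
    f (wittP p a b) = wittP p (f a) (f b) := by
  simp [wittP, map_sum]

lemma pcast_ne_zero (p : ℕ) (hp : p.Prime) (n : ℕ) :
    ((p : ℕ) : MvPolynomial (Fin n) ℤ) ≠ 0 := by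
  exact_mod_cast Nat.cast_ne_zero.mpr hp.ne_zero

lemma wittP_comm (p : ℕ) (hp : p.Prime) {A : Type*} [CommRing A] (a b : A) :
    wittP p a b = wittP p b a := by
  have key : wittP p (MvPolynomial.X 0 : MvPolynomial (Fin 2) ℤ) (MvPolynomial.X 1)
      = wittP p (MvPolynomial.X 1) (MvPolynomial.X 0) := by
    apply mul_left_cancel₀ (pcast_ne_zero p hp 2)
    rw [p_mul_wittP p hp, p_mul_wittP p hp, add_comm]
    ring
  let f : MvPolynomial (Fin 2) ℤ →+* A :=
    (MvPolynomial.aeval ![a, b] : MvPolynomial (Fin 2) ℤ →ₐ[ℤ] A).toRingHom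
  have h2 := congrArg f key
  rw [map_wittP p f, map_wittP p f] at h2
  simpa [f] using h2

lemma wittP_cocycle (p : ℕ) (hp : p.Prime) {A : Type*} [CommRing A] (a b c : A) :
    wittP p a b + wittP p (a + b) c = wittP p b c + wittP p a (b + c) := by
  have key : wittP p (MvPolynomial.X 0 : MvPolynomial (Fin 3) ℤ) (MvPolynomial.X 1)
        + wittP p (MvPolynomial.X 0 + MvPolynomial.X 1) (MvPolynomial.X 2)
      = wittP p (MvPolynomial.X 1) (MvPolynomial.X 2)
        + wittP p (MvPolynomial.X 0) (MvPolynomial.X 1 + MvPolynomial.X 2) := by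
    apply mul_left_cancel₀ (pcast_ne_zero p hp 3)
    rw [mul_add, mul_add, p_mul_wittP p hp, p_mul_wittP p hp, p_mul_wittP p hp,
      p_mul_wittP p hp]
    ring
  let f : MvPolynomial (Fin 3) ℤ →+* A :=
    (MvPolynomial.aeval ![a, b, c] : MvPolynomial (Fin 3) ℤ →ₐ[ℤ] A).toRingHom
  have h2 := congrArg f key
  rw [map_add, map_add, map_wittP p f, map_wittP p f, map_wittP p f, map_wittP p f,
    map_add, map_add] at h2
  simpa [f] using h2

/-- Let `A` be an `𝔽_p`-algebra with a Frobenius splitting `φ : A → A`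
(additive, `φ(a^p b) = a φ(b)`, `φ(1) = 1`).  Then `A × A` with the twisted
operations `(a₀,a₁) + (b₀,b₁) = (a₀+b₀, a₁+b₁−φ(P(a₀,b₀)))` and
`(a₀,a₁)·(b₀,b₁) = (a₀b₀, a₀b₁+b₀a₁)` is a commutative ring `W₂^φ(A)`. -/
theorem twistedWittPair_commRing_exists
    (p : ℕ) (hp : p.Prime) (A : Type*) [CommRing A] [CharP A p]
    (φ : A → A) (hadd : ∀ a b : A, φ (a + b) = φ a + φ b)
    (hsemilinear : ∀ a b : A, φ (a ^ p * b) = a * φ b)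
    (hone : φ 1 = 1) :
    ∃ inst : CommRing (WittPair A),
      letI := inst
      (∀ x y : WittPair A,
          x + y = ⟨x.fst + y.fst, x.snd + y.snd - φ (wittP p x.fst y.fst)⟩) ∧
      (∀ x y : WittPair A,
          x * y = ⟨x.fst * y.fst, x.fst * y.snd + y.fst * x.snd⟩) := by
  have hzero : φ 0 = 0 := by
    have h := hadd 0 0
    rw [add_zero] at h
    exact (left_eq_add.mp h)
  have hmulP : ∀ c a b : A, φ (wittP p (c * a) (c * b)) = c * φ (wittP p a b) := by
    intro c a b
    rw [wittP_smul, hsemilinear]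
  letI : Add (WittPair A) :=
    ⟨fun x y => ⟨x.fst + y.fst, x.snd + y.snd - φ (wittP p x.fst y.fst)⟩⟩
  letI : Zero (WittPair A) := ⟨⟨0, 0⟩⟩
  letI : Neg (WittPair A) := ⟨fun x => ⟨-x.fst, -x.snd + φ (wittP p x.fst (-x.fst))⟩⟩
  letI : Mul (WittPair A) :=
    ⟨fun x y => ⟨x.fst * y.fst, x.fst * y.snd + y.fst * x.snd⟩⟩
  letI : One (WittPair A) := ⟨⟨1, 0⟩⟩
  refine ⟨{
    add := (· + ·)
    zero := 0
    neg := (- ·)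
    mul := (· * ·)
    one := 1
    nsmul := nsmulRec
    zsmul := zsmulRec
    add_assoc := ?add_assoc
    zero_add := ?zero_add
    add_zero := ?add_zero
    neg_add_cancel := ?neg_add_cancel
    add_comm := ?add_comm
    left_distrib := ?left_distrib
    right_distrib := ?right_distrib
    zero_mul := ?zero_mul
    mul_zero := ?mul_zero
    mul_assoc := ?mul_assoc
    one_mul := ?one_mul
    mul_one := ?mul_one
    mul_comm := ?mul_comm }, fun x y => rfl, fun x y => rfl⟩
  case add_assoc =>
    rintro ⟨x0, x1⟩ ⟨y0, y1⟩ ⟨z0, z1⟩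
    show WittPair.mk (x0 + y0 + z0) ((x1 + y1 - φ (wittP p x0 y0)) + z1 - φ (wittP p (x0 + y0) z0))
      = WittPair.mk (x0 + (y0 + z0)) (x1 + (y1 + z1 - φ (wittP p y0 z0)) - φ (wittP p x0 (y0 + z0)))
    have hc := wittP_cocycle p hp x0 y0 z0
    have hφ := congrArg φ hc
    rw [hadd, hadd] at hφ
    rw [WittPair.mk.injEq]
    exact ⟨add_assoc _ _ _, by linear_combination -hφ⟩
  case zero_add =>
    rintro ⟨x0, x1⟩
    show WittPair.mk (0 + x0) (0 + x1 - φ (wittP p 0 x0)) = WittPair.mk x0 x1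
    rw [WittPair.mk.injEq, wittP_zero_left, hzero]
    constructor <;> ring
  case add_zero =>
    rintro ⟨x0, x1⟩
    show WittPair.mk (x0 + 0) (x1 + 0 - φ (wittP p x0 0)) = WittPair.mk x0 x1
    rw [WittPair.mk.injEq, wittP_zero_right, hzero]
    constructor <;> ring
  case neg_add_cancel =>
    rintro ⟨x0, x1⟩
    show WittPair.mk (-x0 + x0) ((-x1 + φ (wittP p x0 (-x0))) + x1 - φ (wittP p (-x0) x0))
      = WittPair.mk 0 0
    rw [WittPair.mk.injEq, wittP_comm p hp (-x0) x0]
    constructor <;> ring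
  case add_comm =>
    rintro ⟨x0, x1⟩ ⟨y0, y1⟩
    show WittPair.mk (x0 + y0) (x1 + y1 - φ (wittP p x0 y0))
      = WittPair.mk (y0 + x0) (y1 + x1 - φ (wittP p y0 x0))
    rw [WittPair.mk.injEq, wittP_comm p hp x0 y0]
    constructor <;> ring
  case left_distrib =>
    rintro ⟨x0, x1⟩ ⟨y0, y1⟩ ⟨z0, z1⟩
    show WittPair.mk (x0 * (y0 + z0)) (x0 * (y1 + z1 - φ (wittP p y0 z0)) + (y0 + z0) * x1)
      = WittPair.mk (x0 * y0 + x0 * z0)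
          ((x0 * y1 + y0 * x1) + (x0 * z1 + z0 * x1) - φ (wittP p (x0 * y0) (x0 * z0)))
    rw [WittPair.mk.injEq]
    refine ⟨by ring, ?_⟩
    have h := hmulP x0 y0 z0
    linear_combination h
  case right_distrib =>
    rintro ⟨x0, x1⟩ ⟨y0, y1⟩ ⟨z0, z1⟩
    show WittPair.mk ((x0 + y0) * z0) ((x0 + y0) * z1 + z0 * (x1 + y1 - φ (wittP p x0 y0)))
      = WittPair.mk (x0 * z0 + y0 * z0)
          ((x0 * z1 + z0 * x1) + (y0 * z1 + z0 * y1) - φ (wittP p (x0 * z0) (y0 * z0)))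
    rw [WittPair.mk.injEq]
    refine ⟨by ring, ?_⟩
    have h := hmulP z0 x0 y0
    rw [mul_comm z0 x0, mul_comm z0 y0] at h
    linear_combination h
  case zero_mul =>
    rintro ⟨x0, x1⟩
    show WittPair.mk (0 * x0) (0 * x1 + x0 * 0) = WittPair.mk 0 0
    rw [WittPair.mk.injEq]
    constructor <;> ring
  case mul_zero =>
    rintro ⟨x0, x1⟩
    show WittPair.mk (x0 * 0) (x0 * 0 + 0 * x1) = WittPair.mk 0 0
    rw [WittPair.mk.injEq]
    constructor <;> ring
  case mul_assoc =>
    rintro ⟨x0, x1⟩ ⟨y0, y1⟩ ⟨z0, z1⟩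
    show WittPair.mk (x0 * y0 * z0) ((x0 * y0) * z1 + z0 * (x0 * y1 + y0 * x1))
      = WittPair.mk (x0 * (y0 * z0)) (x0 * (y0 * z1 + z0 * y1) + (y0 * z0) * x1)
    rw [WittPair.mk.injEq]
    constructor <;> ring
  case one_mul =>
    rintro ⟨x0, x1⟩
    show WittPair.mk (1 * x0) (1 * x1 + x0 * 0) = WittPair.mk x0 x1
    rw [WittPair.mk.injEq]
    constructor <;> ring
  case mul_one =>
    rintro ⟨x0, x1⟩
    show WittPair.mk (x0 * 1) (x0 * 0 + 1 * x1) = WittPair.mk x0 x1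
    rw [WittPair.mk.injEq]
    constructor <;> ring
  case mul_comm =>
    rintro ⟨x0, x1⟩ ⟨y0, y1⟩
    show WittPair.mk (x0 * y0) (x0 * y1 + y0 * x1) = WittPair.mk (y0 * x0) (y0 * x1 + x0 * y1)
    rw [WittPair.mk.injEq]
    constructor <;> ring
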